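/- The multiplicative group generated by the two quaternions 1 + j + k and 1 + 2i in the group of units of ℍ(ℚ) is not a free group of rank 2: the homomorphism from the free group on two generators to the units of ℍ(ℚ) sending the generators to 1 + j + k and 1 + 2i is not injective. -/

import Mathlib

/-- The quaternions `1 + j + k` and `1 + 2i` do not freely
generate a free subgroup of rank 2 of the units of `ℍ(ℚ)`. -/
theorem one_add_j_add_k_one_add_two_i_not_free :
    ¬ Function.Injective
      (FreeGroup.lift
        (![Units.mk0 (⟨1, 0, 1, 1⟩ : Quaternion ℚ)
            (fun h => one_ne_zero (congrArg QuaternionAlgebra.re h : (1 : ℚ) = 0)),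
           Units.mk0 (⟨1, 2, 0, 0⟩ : Quaternion ℚ)
            (fun h => one_ne_zero (congrArg QuaternionAlgebra.re h : (1 : ℚ) = 0))] :
          Fin 2 → (Quaternion ℚ)ˣ)) := by
  intro h
  set a : FreeGroup (Fin 2) := FreeGroup.of 0 with ha
  set b : FreeGroup (Fin 2) := FreeGroup.of 1 with hb
  have key : a*b*b*a*a*a*b = b*a*a*a*b*b*a := by
    apply h
    simp only [map_mul, FreeGroup.lift_apply_of, Matrix.cons_val_zero, Matrix.cons_val_one,
      Matrix.head_cons, ha, hb]
    ext : 1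
    push_cast [Units.val_mul, Units.mk0]
    obtain ⟨p, hp⟩ : ∃ p : Quaternion ℚ, p = ⟨1, 0, 1, 1⟩ := ⟨_, rfl⟩
    obtain ⟨q, hq⟩ : ∃ q : Quaternion ℚ, q = ⟨1, 2, 0, 0⟩ := ⟨_, rfl⟩
    rw [← hp, ← hq]
    have hp' : p.re = 1 ∧ p.imI = 0 ∧ p.imJ = 1 ∧ p.imK = 1 := by subst hp; exact ⟨rfl, rfl, rfl, rfl⟩
    have hq' : q.re = 1 ∧ q.imI = 2 ∧ q.imJ = 0 ∧ q.imK = 0 := by subst hq; exact ⟨rfl, rfl, rfl, rfl⟩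
    obtain ⟨p1, p2, p3, p4⟩ := hp'
    obtain ⟨q1, q2, q3, q4⟩ := hq'
    ext <;> simp [Quaternion.re_mul, Quaternion.imI_mul, Quaternion.imJ_mul, Quaternion.imK_mul,
      p1, p2, p3, p4, q1, q2, q3, q4] <;> norm_num
  rw [ha, hb] at key
  revert key
  decide
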